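/- A connected graph G of order n ≥ 3 satisfies γ_oidR(G) = 3 if and only if G is a star K_{1,n-1}. -/

import Mathlib

open SimpleGraph Finset

/-- Outer independent double Roman dominating function. -/
def IsOIDRDF {V : Type*} (G : SimpleGraph V) (f : V → ℕ) : Prop :=
  (∀ v, f v ≤ 3) ∧
  (∀ v, f v = 0 → (∃ u, G.Adj v u ∧ f u = 3) ∨
    (∃ u w, u ≠ w ∧ G.Adj v u ∧ G.Adj v w ∧ f u = 2 ∧ f w = 2)) ∧
  (∀ v, f v = 1 → ∃ u, G.Adj v u ∧ 2 ≤ f u) ∧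
  (∀ u v, G.Adj u v → f u = 0 → f v ≠ 0)

/-- Outer independent double Roman domination number. -/
noncomputable def oidRNum {V : Type*} (G : SimpleGraph V) [Fintype V] : ℕ :=
  sInf {w | ∃ f : V → ℕ, IsOIDRDF G f ∧ w = ∑ v, f v}

/-- Outer independent Roman dominating function. -/
def IsOIRDF {V : Type*} (G : SimpleGraph V) (f : V → ℕ) : Prop :=
  (∀ v, f v ≤ 2) ∧
  (∀ v, f v = 0 → ∃ u, G.Adj v u ∧ f u = 2) ∧
  (∀ u v, G.Adj u v → f u = 0 → f v ≠ 0)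

/-- Outer independent Roman domination number. -/
noncomputable def oiRNum {V : Type*} (G : SimpleGraph V) [Fintype V] : ℕ :=
  sInf {w | ∃ f : V → ℕ, IsOIRDF G f ∧ w = ∑ v, f v}

/-- Vertex cover number. -/
noncomputable def coverNum {V : Type*} (G : SimpleGraph V) [Fintype V] : ℕ :=
  sInf {k | ∃ S : Finset V, S.card = k ∧ ∀ u v, G.Adj u v → u ∈ S ∨ v ∈ S}

/-- Domination number. -/
noncomputable def domNum {V : Type*} (G : SimpleGraph V) [Fintype V] : ℕ :=
  sInf {k | ∃ S : Finset V, S.card = k ∧ ∀ v, v ∉ S → ∃ u ∈ S, G.Adj v u}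

/-- Independence number. -/
noncomputable def indNum {V : Type*} (G : SimpleGraph V) [Fintype V] : ℕ :=
  sSup {k | ∃ S : Finset V, S.card = k ∧ ∀ u ∈ S, ∀ v ∈ S, ¬ G.Adj u v}

/-- Maximum degree. -/
noncomputable def maxDeg {V : Type*} (G : SimpleGraph V) [Fintype V] : ℕ :=
  sSup (Set.range fun v => Nat.card {u | G.Adj v u})

/-- Underlying relation for the corona product. -/
def coronaRel {V W : Type*} (G : SimpleGraph V) (H : SimpleGraph W) :
    (V ⊕ V × W) → (V ⊕ V × W) → Prop
  | Sum.inl u, Sum.inl v => G.Adj u v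
  | Sum.inl u, Sum.inr p => u = p.1
  | Sum.inr p, Sum.inl u => u = p.1
  | Sum.inr p, Sum.inr q => p.1 = q.1 ∧ H.Adj p.2 q.2

/-- The corona product `G ⊙ H`. -/
def corona {V W : Type*} (G : SimpleGraph V) (H : SimpleGraph W) :
    SimpleGraph (V ⊕ V × W) :=
  SimpleGraph.fromRel (coronaRel G H)

lemma oidr_const3 {V : Type*} (G : SimpleGraph V) : IsOIDRDF G (fun _ => 3) :=
  ⟨fun _ => le_refl 3, fun v h => by simp at h, fun v h => by simp at h,
   fun u v _ h => by simp at h⟩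

lemma oidr_sum_ge {V : Type*} [Fintype V] (G : SimpleGraph V) (f : V → ℕ)
    (hf : IsOIDRDF G f) (h3 : 3 ≤ Fintype.card V) : 3 ≤ ∑ v, f v := by
  classical
  obtain ⟨hle, h0, h1, hind⟩ := hf
  by_contra h
  push_neg at h
  by_cases hz : ∃ v, f v = 0
  · obtain ⟨v, hv⟩ := hz
    rcases h0 v hv with ⟨u, _, hu3⟩ | ⟨u, w, huw, _, _, hu2, hw2⟩
    · have : f u ≤ ∑ x, f x := Finset.single_le_sum (fun _ _ => Nat.zero_le _) (mem_univ u)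
      omega
    · have : ∑ x ∈ ({u, w} : Finset V), f x ≤ ∑ x, f x :=
        Finset.sum_le_sum_of_subset (subset_univ _)
      rw [Finset.sum_pair huw] at this
      omega
  · push_neg at hz
    have : (Finset.univ : Finset V).card ≤ ∑ x, f x := by
      rw [Finset.card_eq_sum_ones]
      exact Finset.sum_le_sum (fun i _ => Nat.one_le_iff_ne_zero.mpr (hz i))
    rw [Finset.card_univ] at this
    omega

theorem stmt5 {V : Type*} [Fintype V] (G : SimpleGraph V) (n : ℕ)
    (hn : Fintype.card V = n) (h3 : 3 ≤ n) (hc : G.Connected) :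
    oidRNum G = 3 ↔ Nonempty (G ≃g completeBipartiteGraph (Fin 1) (Fin (n - 1))) := by
  classical
  have hcard : 3 ≤ Fintype.card V := by omega
  constructor
  · intro h
    have hne : {w | ∃ f : V → ℕ, IsOIDRDF G f ∧ w = ∑ v, f v}.Nonempty :=
      ⟨_, fun _ => 3, oidr_const3 G, rfl⟩
    have hmem := Nat.sInf_mem hne
    rw [show sInf {w | ∃ f : V → ℕ, IsOIDRDF G f ∧ w = ∑ v, f v} = oidRNum G from rfl, h] at hmem
    obtain ⟨f, hf, hsum⟩ := hmem
    obtain ⟨hle, h0, h1, hind⟩ := hf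
    -- there is a vertex with value 0
    have hz : ∃ v, f v = 0 := by
      by_contra hz
      push_neg at hz
      have hall1 : ∀ v, f v = 1 := by
        intro v
        by_contra hv1
        have hv2 : 2 ≤ f v := by have := hz v; omega
        have : f v + ∑ x ∈ univ.erase v, f x = ∑ x, f x :=
          Finset.add_sum_erase _ f (mem_univ v)
        have h2 : (univ.erase v).card ≤ ∑ x ∈ univ.erase v, f x := by
          rw [Finset.card_eq_sum_ones]
          exact Finset.sum_le_sum (fun i _ => Nat.one_le_iff_ne_zero.mpr (hz i))
        rw [Finset.card_erase_of_mem (mem_univ v), Finset.card_univ, hn] at h2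
        omega
      have : ∃ v : V, True := by
        have : 0 < Fintype.card V := by omega
        obtain ⟨v⟩ := Fintype.card_pos_iff.mp this
        exact ⟨v, trivial⟩
      obtain ⟨v, -⟩ := this
      obtain ⟨u, _, hu⟩ := h1 v (hall1 v)
      rw [hall1 u] at hu
      omega
    obtain ⟨v0, hv0⟩ := hz
    -- there is a vertex with value 3
    obtain ⟨c, hcadj, hc3⟩ : ∃ c, G.Adj v0 c ∧ f c = 3 := by
      rcases h0 v0 hv0 with ⟨u, hadj, hu3⟩ | ⟨u, w, huw, _, _, hu2, hw2⟩
      · exact ⟨u, hadj, hu3⟩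
      · exfalso
        have : ∑ x ∈ ({u, w} : Finset V), f x ≤ ∑ x, f x :=
          Finset.sum_le_sum_of_subset (subset_univ _)
        rw [Finset.sum_pair huw] at this
        omega
    -- all other vertices have value 0
    have hrest : ∀ v, v ≠ c → f v = 0 := by
      have hsplit : f c + ∑ x ∈ univ.erase c, f x = ∑ x, f x :=
        Finset.add_sum_erase _ f (mem_univ c)
      have hz2 : ∑ x ∈ univ.erase c, f x = 0 := by omega
      intro v hv
      exact Finset.sum_eq_zero_iff.mp hz2 v (Finset.mem_erase.mpr ⟨hv, mem_univ v⟩)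
    -- star structure
    have hadjc : ∀ v, v ≠ c → G.Adj c v := by
      intro v hv
      rcases h0 v (hrest v hv) with ⟨u, hadj, hu3⟩ | ⟨u, w, huw, hau, haw, hu2, hw2⟩
      · have : u = c := by
          by_contra hu
          rw [hrest u hu] at hu3; omega
        subst this; exact hadj.symm
      · exfalso
        by_cases hu : u = c
        · subst hu; omega
        · rw [hrest u hu] at hu2; omega
    have hindep : ∀ u v, u ≠ c → v ≠ c → ¬ G.Adj u v := by
      intro u v hu hv hadj
      exact hind u v hadj (hrest u hu) (hrest v hv)
    -- build the isomorphism
    let e₀ : {x : V // x = c} ≃ Fin 1 := Fintype.equivFinOfCardEq (Fintype.card_subtype_eq c)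
    let e₁ : {x : V // ¬ x = c} ≃ Fin (n - 1) := Fintype.equivFinOfCardEq (by
      rw [Fintype.card_subtype_compl, Fintype.card_subtype_eq, hn])
    let e : V ≃ Fin 1 ⊕ Fin (n - 1) :=
      (Equiv.sumCompl (· = c)).symm.trans (Equiv.sumCongr e₀ e₁)
    have he_pos : ∀ (a : V) (h : a = c), e a = Sum.inl (e₀ ⟨a, h⟩) := by
      intro a h
      simp only [e, Equiv.trans_apply, Equiv.sumCongr_apply]
      rw [Equiv.sumCompl_symm_apply_of_pos (p := fun x => x = c) (a := a) h]; rfl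
    have he_neg : ∀ (a : V) (h : ¬ a = c), e a = Sum.inr (e₁ ⟨a, h⟩) := by
      intro a h
      simp only [e, Equiv.trans_apply, Equiv.sumCongr_apply]
      rw [Equiv.sumCompl_symm_apply_of_neg (p := fun x => x = c) (a := a) h]; rfl
    refine ⟨⟨e, ?_⟩⟩
    intro a b
    by_cases ha : a = c <;> by_cases hb : b = c
    · rw [he_pos a ha, he_pos b hb]
      simp [ha, hb]
    · rw [he_pos a ha, he_neg b hb]
      have := hadjc b hb
      rw [← ha] at this
      simp [this]
    · rw [he_neg a ha, he_pos b hb]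
      have := (hadjc a ha).symm
      rw [← hb] at this
      simp [this]
    · rw [he_neg a ha, he_neg b hb]
      simp [hindep a b ha hb]
  · rintro ⟨e⟩
    set c : V := e.symm (Sum.inl 0) with hcdef
    have hec : e c = Sum.inl 0 := by simp [hcdef]
    have he_ne : ∀ v : V, v ≠ c → ∃ j, e v = Sum.inr j := by
      intro v hv
      rcases h : e v with j | j
      · exfalso
        apply hv
        have : e v = Sum.inl 0 := by
          rw [h]
          congr
          omega
        have := congrArg e.symm this
        simpa [hcdef] using this
      · exact ⟨j, rfl⟩
    set f : V → ℕ := fun v => if v = c then 3 else 0 with hfdef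
    have hof : IsOIDRDF G f := by
      refine ⟨fun v => by by_cases h : v = c <;> simp [hfdef, h], ?_, ?_, ?_⟩
      · intro v hv
        have hvne : v ≠ c := by
          intro h; rw [hfdef] at hv; simp [h] at hv
        obtain ⟨j, hj⟩ := he_ne v hvne
        left
        refine ⟨c, ?_, by simp [hfdef]⟩
        have : (completeBipartiteGraph (Fin 1) (Fin (n-1))).Adj (e v) (e c) := by
          rw [hj, hec]; simp
        exact e.map_rel_iff.mp this
      · intro v hv
        exfalso
        rw [hfdef] at hv
        by_cases h : v = c <;> simp [h] at hv
      · intro u v hadj hu hv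
        have hune : u ≠ c := by intro h; rw [hfdef] at hu; simp [h] at hu
        have hvne : v ≠ c := by intro h; rw [hfdef] at hv; simp [h] at hv
        obtain ⟨j, hj⟩ := he_ne u hune
        obtain ⟨k, hk⟩ := he_ne v hvne
        have : (completeBipartiteGraph (Fin 1) (Fin (n-1))).Adj (e u) (e v) :=
          e.map_rel_iff.mpr hadj
        rw [hj, hk] at this
        simp at this
    have hfs : ∑ v, f v = 3 := by
      rw [hfdef]
      simp [Finset.sum_ite_eq' Finset.univ c]
    have hub : oidRNum G ≤ 3 := Nat.sInf_le ⟨f, hof, hfs.symm⟩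
    have hlb : 3 ≤ oidRNum G := by
      have hne : {w | ∃ f : V → ℕ, IsOIDRDF G f ∧ w = ∑ v, f v}.Nonempty :=
        ⟨_, fun _ => 3, oidr_const3 G, rfl⟩
      obtain ⟨g, hg, hgs⟩ := Nat.sInf_mem hne
      rw [show sInf {w | ∃ f : V → ℕ, IsOIDRDF G f ∧ w = ∑ v, f v} = oidRNum G from rfl] at hgs
      rw [hgs]
      exact oidr_sum_ge G g hg hcard
    omega
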